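/- arXiv:2510.25292 — 2 statements merged into one kernel-verified Lean document; each statement's English description precedes it below -/
import Mathlib

section
/- For fixed sizes (n₁, n₂, …, n_ℓ) with each nᵢ > 1, if a nonzero binary matrix A ∈ {0,1}^{n×n} (where n = n₁n₂⋯n_ℓ) admits two Kronecker factorizations A = A₁ ⊗ A₂ ⊗ ⋯ ⊗ A_ℓ = Â₁ ⊗ Â₂ ⊗ ⋯ ⊗ Â_ℓ with Aᵢ, Âᵢ ∈ {0,1}^{nᵢ×nᵢ}, then Aᵢ = Âᵢ for all i = 1, …, ℓ. -/
namespace KronPaper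

/-- Kronecker product of square binary (Bool-valued) matrices. -/
def kron {m n : ℕ} (A : Matrix (Fin m) (Fin m) Bool) (B : Matrix (Fin n) (Fin n) Bool) :
    Matrix (Fin (m * n)) (Fin (m * n)) Bool :=
  Matrix.of fun i j => by
    have hn : 0 < n := by
      rcases Nat.eq_zero_or_pos n with h | h
      · exact absurd i.isLt (by simp [h])
      · exact h
    exact
      A ⟨i.val / n, Nat.div_lt_of_lt_mul (lt_of_lt_of_eq i.isLt (mul_comm m n))⟩
        ⟨j.val / n, Nat.div_lt_of_lt_mul (lt_of_lt_of_eq j.isLt (mul_comm m n))⟩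
      && B ⟨i.val % n, Nat.mod_lt _ hn⟩ ⟨j.val % n, Nat.mod_lt _ hn⟩

/-- Cast a square matrix along an equality of sizes. -/
def castK {m n : ℕ} (h : m = n) (M : Matrix (Fin m) (Fin m) Bool) :
    Matrix (Fin n) (Fin n) Bool :=
  Matrix.reindex (finCongr h) (finCongr h) M

/-- Iterated Kronecker product of a list of square binary matrices. -/
def kronList : (ns : List ℕ) →
    ((i : Fin ns.length) → Matrix (Fin (ns.get i)) (Fin (ns.get i)) Bool) →
    Matrix (Fin ns.prod) (Fin ns.prod) Bool
  | [], _ => Matrix.of fun _ _ => true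
  | _ :: ns, F => kron (F ⟨0, Nat.succ_pos _⟩) (kronList ns fun i => F i.succ)


/-- Square binary matrices of size `n`. -/
abbrev BMat (n : ℕ) := Matrix (Fin n) (Fin n) Bool


lemma idx_lt {m n a p : ℕ} (ha : a < m) (hp : p < n) : a * n + p < m * n :=
  lt_of_lt_of_le (by rw [add_mul, one_mul]; omega : a * n + p < (a+1) * n)
    (Nat.mul_le_mul_right n ha)

lemma kron_apply {m n : ℕ} (A : Matrix (Fin m) (Fin m) Bool) (B : Matrix (Fin n) (Fin n) Bool)
    (a b : Fin m) (p q : Fin n) :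
    kron A B ⟨a.val * n + p.val, idx_lt a.isLt p.isLt⟩ ⟨b.val * n + q.val, idx_lt b.isLt q.isLt⟩
      = (A a b && B p q) := by
  have hdiv : ∀ (x : Fin m) (y : Fin n), (x.val * n + y.val) / n = x.val := fun x y => by
    rw [add_comm, Nat.add_mul_div_right _ _ (Nat.lt_of_le_of_lt (Nat.zero_le _) y.isLt),
      Nat.div_eq_of_lt y.isLt, Nat.zero_add]
  have hmod : ∀ (x : Fin m) (y : Fin n), (x.val * n + y.val) % n = y.val := fun x y => by
    rw [add_comm, Nat.add_mul_mod_self_right, Nat.mod_eq_of_lt y.isLt]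
  simp only [kron, Matrix.of_apply, hdiv, hmod, Fin.eta]

lemma kron_entry_true {m n : ℕ} {A : Matrix (Fin m) (Fin m) Bool}
    {B : Matrix (Fin n) (Fin n) Bool} {i j : Fin (m * n)}
    (h : kron A B i j = true) :
    (∃ a b, A a b = true) ∧ (∃ p q, B p q = true) := by
  simp only [kron, Matrix.of_apply, Bool.and_eq_true] at h
  exact ⟨⟨_, _, h.1⟩, ⟨_, _, h.2⟩⟩

lemma kron_inj {m n : ℕ} {A A' : Matrix (Fin m) (Fin m) Bool}
    {B B' : Matrix (Fin n) (Fin n) Bool}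
    (hnz : ∃ i j, kron A B i j = true) (h : kron A B = kron A' B') :
    A = A' ∧ B = B' := by
  obtain ⟨i, j, hij⟩ := hnz
  simp only [kron, Matrix.of_apply, Bool.and_eq_true] at hij
  obtain ⟨hA, hB⟩ := hij
  set a := (⟨i.val / n, _⟩ : Fin m)
  set b := (⟨j.val / n, _⟩ : Fin m)
  set p := (⟨i.val % n, _⟩ : Fin n)
  set q := (⟨j.val % n, _⟩ : Fin n)
  have key : ∀ (a' b' : Fin m) (p' q' : Fin n),
      (A a' b' && B p' q') = (A' a' b' && B' p' q') := by
    intro a' b' p' q'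
    have := congrFun (congrFun h ⟨a'.val * n + p'.val, idx_lt a'.isLt p'.isLt⟩)
      ⟨b'.val * n + q'.val, idx_lt b'.isLt q'.isLt⟩
    rwa [kron_apply, kron_apply] at this
  have h0 := key a b p q
  rw [hA, hB] at h0
  have hA' : A' a b = true := by
    cases hh : A' a b <;> simp [hh] at h0 ⊢
  have hB' : B' p q = true := by
    cases hh : B' p q <;> simp [hh] at h0 ⊢
  constructor
  · ext a' b'
    have := key a' b' p q
    rw [hB, hB'] at this
    simpa using this
  · ext p' q'
    have := key a b p' q'
    rw [hA, hA'] at this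
    simpa using this

/-- uniqueness of a Kronecker factorization of a nonzero binary
matrix with fixed factor sizes `(n₁, …, n_ℓ)`. -/
theorem uniqueness_of_factorization (ns : List ℕ) (hns : ∀ i : Fin ns.length, 1 < ns.get i)
    (F G : (i : Fin ns.length) → BMat (ns.get i))
    (hnz : ∃ i j, kronList ns F i j = true)
    (h : kronList ns F = kronList ns G) :
    F = G := by
  induction ns with
  | nil => funext i; exact absurd i.isLt (by simp)
  | cons n l ih =>
    simp only [kronList] at h hnz
    obtain ⟨i, j, hij⟩ := hnz
    have hparts := kron_entry_true hij
    have hsplit := kron_inj ⟨i, j, hij⟩ h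
    have htail := ih (fun i => hns i.succ) (fun i => F i.succ) (fun i => G i.succ)
      hparts.2 hsplit.2
    funext k
    refine Fin.cases ?_ ?_ k
    · exact hsplit.1
    · intro k'; exact congrFun htail k'

end KronPaper
end

section
/- Let A ∈ {0,1}^{n×n}, let p > 1 be an integer, and let l₁,…,l_q > 1 and r₁,…,r_s > 1 be integers with n = (∏ lᵢ) · p · (∏ rⱼ). Then A admits both an (l₁,…,l_q, p·∏rⱼ) factorization and a ((∏lᵢ)·p, r₁,…,r_s) factorization if and only if A admits an (l₁,…,l_q, p, r₁,…,r_s) factorization. -/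
namespace KronPaper

lemma castK_apply {m n : ℕ} (h : m = n) (M : BMat m) (i j : Fin n) :
    castK h M i j = M ⟨i.1, h ▸ i.2⟩ ⟨j.1, h ▸ j.2⟩ := rfl
lemma castK_rfl {n : ℕ} (M : BMat n) : castK rfl M = M := rfl
lemma castK_trans {m n k : ℕ} (h1 : m = n) (h2 : n = k) (M : BMat m) :
    castK h2 (castK h1 M) = castK (h1.trans h2) M := by subst h1; subst h2; rfl
lemma castK_self {n : ℕ} (h : n = n) (M : BMat n) : castK h M = M := castK_rfl M
lemma eq_castK_symm {m n : ℕ} (h : m = n) (M : BMat m) (N : BMat n) :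
    castK h M = N ↔ M = castK h.symm N := by
  subst h; rw [castK_self, castK_self]
lemma kron_apply_s7 {m n : ℕ} (A : BMat m) (B : BMat n) (i j : Fin (m*n))
    (h1 : i.1 / n < m) (h2 : j.1 / n < m) (h3 : i.1 % n < n) (h4 : j.1 % n < n) :
    kron A B i j = (A ⟨i.1 / n, h1⟩ ⟨j.1 / n, h2⟩ && B ⟨i.1 % n, h3⟩ ⟨j.1 % n, h4⟩) := rfl
lemma ent_congr {n : ℕ} (A : BMat n) {i i' j j' : ℕ} {hi : i < n} {hi' : i' < n}
    {hj : j < n} {hj' : j' < n} (h1 : i = i') (h2 : j = j') :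
    A ⟨i,hi⟩ ⟨j,hj⟩ = A ⟨i',hi'⟩ ⟨j',hj'⟩ := by subst h1; subst h2; rfl

def Fact (ns : List ℕ) (A : BMat ns.prod) : Prop := ∃ F, A = kronList ns F

lemma fact_cons {m : ℕ} {ns : List ℕ} (A : BMat ((m :: ns).prod)) :
    Fact (m :: ns) A ↔ ∃ (B : BMat m) (C : BMat ns.prod), Fact ns C ∧ A = kron B C := by
  constructor
  · rintro ⟨F, rfl⟩
    exact ⟨F ⟨0, Nat.succ_pos _⟩, kronList ns (fun i => F i.succ), ⟨_, rfl⟩, rfl⟩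
  · rintro ⟨B, C, ⟨G, rfl⟩, rfl⟩
    exact ⟨fun i => match i with
      | ⟨0, _⟩ => B
      | ⟨k+1, h⟩ => G ⟨k, Nat.lt_of_succ_lt_succ h⟩, rfl⟩

lemma fact_singleton (m : ℕ) (M : BMat ([m].prod)) : Fact [m] M := by
  have e : [m].prod = m := by simp
  refine ⟨fun i => match i with | ⟨0, _⟩ => castK e M, ?_⟩
  show M = kron (castK e M) (Matrix.of fun _ _ => true)
  funext i j
  have e0 : (List.prod []) = 1 := rfl
  have hi2 := i.2; have hj2 := j.2
  simp only [e] at hi2 hj2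
  have hi : i.1 / (List.prod []) < m := by rw [e0]; omega
  have hj : j.1 / (List.prod []) < m := by rw [e0]; omega
  have h3 : i.1 % (List.prod []) < List.prod [] := by rw [e0]; omega
  have h4 : j.1 % (List.prod []) < List.prod [] := by rw [e0]; omega
  rw [kron_apply_s7 _ _ i j hi hj h3 h4]
  rw [castK_apply]
  simp only [Matrix.of_apply, Bool.and_true]
  exact ent_congr M (Nat.div_one _).symm (Nat.div_one _).symm





lemma kron_assoc {a b c : ℕ} (A : BMat a) (B : BMat b) (C : BMat c) :
    castK (mul_assoc a b c) (kron (kron A B) C) = kron A (kron B C) := by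
  funext i j
  have hbc : 0 < b * c := by
    rcases Nat.eq_zero_or_pos (b*c) with h | h
    · exact absurd i.isLt (by simp [h])
    · exact h
  have hb : 0 < b := by
    rcases Nat.eq_zero_or_pos b with h | h
    · simp [h] at hbc
    · exact h
  have hc : 0 < c := by
    rcases Nat.eq_zero_or_pos c with h | h
    · simp [h] at hbc
    · exact h
  have hi := i.2; have hj := j.2
  have d1 : ∀ v : ℕ, v / (b*c) = v / c / b := by
    intro v; rw [Nat.div_div_eq_div_mul, mul_comm]
  have d2 : ∀ v : ℕ, v % (b*c) / c = v / c % b := by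
    intro v; rw [mul_comm b c, Nat.mod_mul_right_div_self]
  have d3 : ∀ v : ℕ, v % (b*c) % c = v % c := by
    intro v; exact Nat.mod_mod_of_dvd v ⟨b, mul_comm b c⟩
  have e1 : i.1 / (b*c) < a := Nat.div_lt_of_lt_mul (by rw [Nat.mul_comm (b*c) a]; exact i.2)
  have e1' : j.1 / (b*c) < a := Nat.div_lt_of_lt_mul (by rw [Nat.mul_comm (b*c) a]; exact j.2)
  have e2 : i.1 % (b*c) < b*c := Nat.mod_lt _ hbc
  have e2' : j.1 % (b*c) < b*c := Nat.mod_lt _ hbc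
  rw [castK_apply]
  have lt1 : i.1 < (a*b)*c := by rw [mul_assoc]; exact i.2
  have lt1' : j.1 < (a*b)*c := by rw [mul_assoc]; exact j.2
  have f1 : i.1 / c < a*b := Nat.div_lt_of_lt_mul (by rw [Nat.mul_comm c (a*b)]; exact lt1)
  have f1' : j.1 / c < a*b := Nat.div_lt_of_lt_mul (by rw [Nat.mul_comm c (a*b)]; exact lt1')
  have f2 : i.1 % c < c := Nat.mod_lt _ hc
  have f2' : j.1 % c < c := Nat.mod_lt _ hc
  rw [kron_apply_s7 (kron A B) C ⟨i.1, _⟩ ⟨j.1, _⟩ f1 f1' f2 f2']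
  have g1 : i.1 / c / b < a := by rw [← d1]; exact e1
  have g1' : j.1 / c / b < a := by rw [← d1]; exact e1'
  have g2 : i.1 / c % b < b := Nat.mod_lt _ hb
  have g2' : j.1 / c % b < b := Nat.mod_lt _ hb
  rw [kron_apply_s7 A B ⟨i.1 / c, _⟩ ⟨j.1 / c, _⟩ g1 g1' g2 g2']
  rw [kron_apply_s7 A (kron B C) i j e1 e1' e2 e2']
  have g3 : i.1 % (b*c) / c < b := by rw [d2]; exact g2
  have g3' : j.1 % (b*c) / c < b := by rw [d2]; exact g2'
  have g4 : i.1 % (b*c) % c < c := Nat.mod_lt _ hc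
  have g4' : j.1 % (b*c) % c < c := Nat.mod_lt _ hc
  rw [kron_apply_s7 B C ⟨i.1 % (b*c), _⟩ ⟨j.1 % (b*c), _⟩ g3 g3' g4 g4']
  rw [Bool.and_assoc]
  congr 1
  · exact ent_congr A (d1 _).symm (d1 _).symm
  congr 1
  · exact ent_congr B (d2 _).symm (d2 _).symm
  · exact ent_congr C (d3 _).symm (d3 _).symm

lemma kron_castK_right {a m n : ℕ} (h : m = n) (A : BMat a) (B : BMat m) :
    kron A (castK h B) = castK (by rw [h]) (kron A B) := by
  subst h; rw [castK_self, castK_self]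





lemma castK_J_left {n : ℕ} (C : BMat n) (h : 1 * n = n) :
    castK h (kron (Matrix.of fun _ _ => true) C) = C := by
  funext i j
  rw [castK_apply]
  have hn : 0 < n := by
    rcases Nat.eq_zero_or_pos n with h' | h'
    · exact absurd i.isLt (by simp [h'])
    · exact h'
  have hi : i.1 < 1 * n := by omega
  have hj : j.1 < 1 * n := by omega
  have hdi : i.1 / n < 1 := Nat.div_lt_of_lt_mul (by omega : i.1 < n * 1)
  have hdj : j.1 / n < 1 := Nat.div_lt_of_lt_mul (by omega : j.1 < n * 1)
  rw [kron_apply_s7 _ _ ⟨i.1, hi⟩ ⟨j.1, hj⟩ hdi hdj (Nat.mod_lt _ hn) (Nat.mod_lt _ hn)]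
  simp only [Matrix.of_apply, Bool.true_and]
  exact ent_congr C (Nat.mod_eq_of_lt i.2) (Nat.mod_eq_of_lt j.2)

lemma fact_append {L1 L2 : List ℕ} (A : BMat ((L1 ++ L2).prod)) :
    Fact (L1 ++ L2) A ↔ ∃ (B : BMat L1.prod) (C : BMat L2.prod),
      Fact L1 B ∧ Fact L2 C ∧
        A = castK (List.prod_append (l₁ := L1) (l₂ := L2)).symm (kron B C) := by
  induction L1 with
  | nil =>
    constructor
    · intro hA
      refine ⟨Matrix.of fun _ _ => true, A, ⟨fun i => i.elim0, rfl⟩, hA, ?_⟩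
      exact (castK_J_left A _).symm
    · rintro ⟨B, C, ⟨FB, rfl⟩, hC, rfl⟩
      show Fact L2 _
      have : castK (List.prod_append (l₁ := ([] : List ℕ)) (l₂ := L2)).symm
          (kron (kronList [] FB) C) = C := castK_J_left C _
      rw [this]; exact hC
  | cons x T ih =>
    constructor
    · intro hA
      obtain ⟨B0, C0, hC0, hA0⟩ := (fact_cons (m := x) (ns := T ++ L2) A).1 hA
      obtain ⟨B1, C, hB1, hC, rfl⟩ := (ih _).1 hC0
      refine ⟨kron B0 B1, C, (fact_cons _).2 ⟨B0, B1, hB1, rfl⟩, hC, ?_⟩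
      rw [hA0, kron_castK_right, ← kron_assoc, castK_trans]; rfl
    · rintro ⟨B', C, hB', hC, rfl⟩
      obtain ⟨B0, B1, hB1, rfl⟩ := (fact_cons (m := x) (ns := T) B').1 hB'
      apply (fact_cons (m := x) (ns := T ++ L2) _).2
      refine ⟨B0, castK (List.prod_append (l₁ := T) (l₂ := L2)).symm (kron B1 C),
        (ih _).2 ⟨B1, C, hB1, hC, rfl⟩, ?_⟩
      rw [kron_castK_right, ← kron_assoc, castK_trans]; rfl





lemma middle {a p b : ℕ} (hp : 0 < p) (hb : 0 < b)
    (B : BMat a) (C : BMat (p*b)) (D : BMat (a*p)) (E : BMat b)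
    (h : castK (mul_assoc a p b).symm (kron B C) = kron D E) :
    ∃ P : BMat p, kron B C = kron B (kron P E) := by
  have hpb : 0 < p*b := Nat.mul_pos hp hb
  by_cases hB : ∃ i j, B i j = true
  · obtain ⟨i0, j0, hB0⟩ := hB
    have hP : ∀ (q : Fin a) (k : ℕ), k < p → p * q.1 + k < a * p := by
      intro q k hk
      calc p * q.1 + k < p * q.1 + p := by omega
        _ = p * (q.1 + 1) := by rw [Nat.mul_succ]
        _ ≤ p * a := Nat.mul_le_mul le_rfl q.2
        _ = a * p := Nat.mul_comm p a
    refine ⟨Matrix.of fun k k' => D ⟨p * i0.1 + k.1, hP i0 k.1 k.2⟩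
      ⟨p * j0.1 + k'.1, hP j0 k'.1 k'.2⟩, ?_⟩
    have key : ∀ (r r' : ℕ) (hr : r < p*b) (hr' : r' < p*b),
        C ⟨r, hr⟩ ⟨r', hr'⟩ =
          (D ⟨p * i0.1 + r / b, hP i0 _ (Nat.div_lt_of_lt_mul (by rw [Nat.mul_comm b p]; exact hr))⟩
             ⟨p * j0.1 + r' / b, hP j0 _ (Nat.div_lt_of_lt_mul (by rw [Nat.mul_comm b p]; exact hr'))⟩
           && E ⟨r % b, Nat.mod_lt _ hb⟩ ⟨r' % b, Nat.mod_lt _ hb⟩) := by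
      intro r r' hr hr'
      have hub : ∀ (q : Fin a) (r : ℕ), r < p*b → (p*b) * q.1 + r < (a*p)*b := by
        intro q r hr
        calc (p*b) * q.1 + r < (p*b) * q.1 + (p*b) := by omega
          _ = (p*b) * (q.1 + 1) := by rw [Nat.mul_succ]
          _ ≤ (p*b) * a := Nat.mul_le_mul le_rfl q.2
          _ = (a*p)*b := by ring
      have hu := hub i0 r hr
      have hw := hub j0 r' hr'
      have hh := congrFun (congrFun h ⟨(p*b) * i0.1 + r, hu⟩) ⟨(p*b) * j0.1 + r', hw⟩
      have c1 : ((p*b) * i0.1 + r) / (p*b) = i0.1 := by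
        rw [Nat.mul_add_div hpb, Nat.div_eq_of_lt hr]; omega
      have c1' : ((p*b) * j0.1 + r') / (p*b) = j0.1 := by
        rw [Nat.mul_add_div hpb, Nat.div_eq_of_lt hr']; omega
      have c2 : ((p*b) * i0.1 + r) % (p*b) = r := by
        rw [Nat.mul_add_mod, Nat.mod_eq_of_lt hr]
      have c2' : ((p*b) * j0.1 + r') % (p*b) = r' := by
        rw [Nat.mul_add_mod, Nat.mod_eq_of_lt hr']
      have c3 : ((p*b) * i0.1 + r) / b = p * i0.1 + r / b := by
        rw [show (p*b) * i0.1 = b * (p * i0.1) by ring, Nat.mul_add_div hb]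
      have c3' : ((p*b) * j0.1 + r') / b = p * j0.1 + r' / b := by
        rw [show (p*b) * j0.1 = b * (p * j0.1) by ring, Nat.mul_add_div hb]
      have c4 : ((p*b) * i0.1 + r) % b = r % b := by
        rw [show (p*b) * i0.1 = b * (p * i0.1) by ring, Nat.mul_add_mod]
      have c4' : ((p*b) * j0.1 + r') % b = r' % b := by
        rw [show (p*b) * j0.1 = b * (p * j0.1) by ring, Nat.mul_add_mod]
      have q1 : ((p*b) * i0.1 + r) / (p*b) < a := by rw [c1]; exact i0.2
      have q1' : ((p*b) * j0.1 + r') / (p*b) < a := by rw [c1']; exact j0.2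
      have q2 : ((p*b) * i0.1 + r) % (p*b) < p*b := Nat.mod_lt _ hpb
      have q2' : ((p*b) * j0.1 + r') % (p*b) < p*b := Nat.mod_lt _ hpb
      have q3 : ((p*b) * i0.1 + r) / b < a*p := by
        rw [c3]; exact hP i0 _ (Nat.div_lt_of_lt_mul (by rw [Nat.mul_comm b p]; exact hr))
      have q3' : ((p*b) * j0.1 + r') / b < a*p := by
        rw [c3']; exact hP j0 _ (Nat.div_lt_of_lt_mul (by rw [Nat.mul_comm b p]; exact hr'))
      have q4 : ((p*b) * i0.1 + r) % b < b := Nat.mod_lt _ hb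
      have q4' : ((p*b) * j0.1 + r') % b < b := Nat.mod_lt _ hb
      have hh' : (B ⟨((p*b) * i0.1 + r) / (p*b), q1⟩ ⟨((p*b) * j0.1 + r') / (p*b), q1'⟩
            && C ⟨((p*b) * i0.1 + r) % (p*b), q2⟩ ⟨((p*b) * j0.1 + r') % (p*b), q2'⟩)
          = (D ⟨((p*b) * i0.1 + r) / b, q3⟩ ⟨((p*b) * j0.1 + r') / b, q3'⟩
            && E ⟨((p*b) * i0.1 + r) % b, q4⟩ ⟨((p*b) * j0.1 + r') % b, q4'⟩) := hh
      have eB : B ⟨((p*b) * i0.1 + r) / (p*b), q1⟩ ⟨((p*b) * j0.1 + r') / (p*b), q1'⟩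
          = B i0 j0 := ent_congr B c1 c1'
      have eC : C ⟨((p*b) * i0.1 + r) % (p*b), q2⟩ ⟨((p*b) * j0.1 + r') % (p*b), q2'⟩
          = C ⟨r, hr⟩ ⟨r', hr'⟩ := ent_congr C c2 c2'
      have eD : D ⟨((p*b) * i0.1 + r) / b, q3⟩ ⟨((p*b) * j0.1 + r') / b, q3'⟩
          = D ⟨p * i0.1 + r / b, hP i0 _ (Nat.div_lt_of_lt_mul (by rw [Nat.mul_comm b p]; exact hr))⟩
              ⟨p * j0.1 + r' / b, hP j0 _ (Nat.div_lt_of_lt_mul (by rw [Nat.mul_comm b p]; exact hr'))⟩ :=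
        ent_congr D c3 c3'
      have eE : E ⟨((p*b) * i0.1 + r) % b, q4⟩ ⟨((p*b) * j0.1 + r') % b, q4'⟩
          = E ⟨r % b, Nat.mod_lt _ hb⟩ ⟨r' % b, Nat.mod_lt _ hb⟩ := ent_congr E c4 c4'
      rw [eB, eC, eD, eE, hB0, Bool.true_and] at hh'
      exact hh'
    funext i j
    have hi1 : i.1 / (p*b) < a := Nat.div_lt_of_lt_mul (by rw [Nat.mul_comm (p*b) a]; exact i.2)
    have hj1 : j.1 / (p*b) < a := Nat.div_lt_of_lt_mul (by rw [Nat.mul_comm (p*b) a]; exact j.2)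
    have hi2 : i.1 % (p*b) < p*b := Nat.mod_lt _ hpb
    have hj2 : j.1 % (p*b) < p*b := Nat.mod_lt _ hpb
    rw [kron_apply_s7 B C i j hi1 hj1 hi2 hj2, kron_apply_s7 B _ i j hi1 hj1 hi2 hj2]
    congr 1
    have hi3 : i.1 % (p*b) / b < p :=
      Nat.div_lt_of_lt_mul (by rw [Nat.mul_comm b p]; exact hi2)
    have hj3 : j.1 % (p*b) / b < p :=
      Nat.div_lt_of_lt_mul (by rw [Nat.mul_comm b p]; exact hj2)
    rw [kron_apply_s7 _ E ⟨i.1 % (p*b), hi2⟩ ⟨j.1 % (p*b), hj2⟩ hi3 hj3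
      (Nat.mod_lt _ hb) (Nat.mod_lt _ hb)]
    simp only [Matrix.of_apply]
    exact key _ _ hi2 hj2
  · refine ⟨Matrix.of fun _ _ => false, ?_⟩
    push_neg at hB
    simp only [Bool.not_eq_true] at hB
    funext i j
    have hi1 : i.1 / (p*b) < a := Nat.div_lt_of_lt_mul (by rw [Nat.mul_comm (p*b) a]; exact i.2)
    have hj1 : j.1 / (p*b) < a := Nat.div_lt_of_lt_mul (by rw [Nat.mul_comm (p*b) a]; exact j.2)
    rw [kron_apply_s7 B C i j hi1 hj1 (Nat.mod_lt _ hpb) (Nat.mod_lt _ hpb),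
        kron_apply_s7 B _ i j hi1 hj1 (Nat.mod_lt _ hpb) (Nat.mod_lt _ hpb)]
    simp only [hB, Bool.false_and]







/-- `A` admits both an `(l₁, …, l_q, p·∏rⱼ)` and a `((∏lᵢ)·p, r₁, …, r_s)`
factorization iff it admits an `(l₁, …, l_q, p, r₁, …, r_s)` factorization. -/
theorem combined_factorizations (L R : List ℕ) (p : ℕ) (hp : 1 < p)
    (hL : ∀ x ∈ L, 1 < x) (hR : ∀ x ∈ R, 1 < x)
    (A : BMat ((L ++ p :: R).prod)) :
    ((∃ F, A = castK (show (L ++ [p * R.prod]).prod = (L ++ p :: R).prod by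
          simp [List.prod_append, mul_assoc]) (kronList (L ++ [p * R.prod]) F)) ∧
     (∃ G, A = castK (show ((L.prod * p) :: R).prod = (L ++ p :: R).prod by
          simp [List.prod_append, mul_assoc]) (kronList ((L.prod * p) :: R) G))) ↔
      ∃ H, A = kronList (L ++ p :: R) H := by
  have e1 : (L ++ [p * R.prod]).prod = (L ++ p :: R).prod := by
    simp [List.prod_append, mul_assoc]
  have e2 : ((L.prod * p) :: R).prod = (L ++ p :: R).prod := by
    simp [List.prod_append, mul_assoc]
  have s : [p * R.prod].prod = p * R.prod := by simp
  have hp0 : 0 < p := by omega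
  have hb : 0 < R.prod := List.prod_pos (fun x hx => by have := hR x hx; omega)
  constructor
  · rintro ⟨⟨F, hF⟩, ⟨G, hG⟩⟩
    have h1 : Fact (L ++ [p * R.prod]) (castK e1.symm A) :=
      ⟨F, by rw [hF, castK_trans, castK_self]⟩
    have h2 : Fact ((L.prod * p) :: R) (castK e2.symm A) :=
      ⟨G, by rw [hG, castK_trans, castK_self]⟩
    obtain ⟨B, C1, hFB, -, hA1⟩ := (fact_append _).1 h1
    obtain ⟨D, E, hFRE, hA2⟩ := (fact_cons _).1 h2
    have hA1' : A = castK ((List.prod_append).symm.trans (e1.symm.symm)) (kron B C1) := by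
      have := (eq_castK_symm e1.symm A _).1 hA1
      rwa [castK_trans] at this
    have h5 := (eq_castK_symm _ _ _).1 (kron_castK_right s B C1).symm
    rw [h5, castK_trans] at hA1'
    have hmid : castK (mul_assoc L.prod p R.prod).symm (kron B (castK s C1)) = kron D E := by
      rw [← hA2, hA1', castK_trans]; rfl
    obtain ⟨P, hP⟩ := middle hp0 hb B (castK s C1) D E hmid
    refine (fact_append (L1 := L) (L2 := p :: R) A).2
      ⟨B, kron P E, hFB, (fact_cons _).2 ⟨P, E, hFRE, rfl⟩, ?_⟩
    rw [hA1', hP]; rfl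
  · rintro ⟨H, hH⟩
    obtain ⟨B, C0, hFB, hFC0, hA⟩ := (fact_append (L1 := L) (L2 := p :: R) A).1 ⟨H, hH⟩
    obtain ⟨P, E, hFRE, rfl⟩ := (fact_cons _).1 hFC0
    constructor
    · suffices hs : Fact (L ++ [p * R.prod]) (castK e1.symm A) by
        obtain ⟨F, hF⟩ := hs
        exact ⟨F, (eq_castK_symm _ A _).1 hF⟩
      refine (fact_append _).2 ⟨B, castK s.symm (kron P E), hFB, fact_singleton _ _, ?_⟩
      rw [hA, castK_trans, kron_castK_right, castK_trans]; rfl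
    · suffices hs : Fact ((L.prod * p) :: R) (castK e2.symm A) by
        obtain ⟨G, hG⟩ := hs
        exact ⟨G, (eq_castK_symm _ A _).1 hG⟩
      refine (fact_cons _).2 ⟨kron B P, E, hFRE, ?_⟩
      rw [hA, castK_trans]; erw [← kron_assoc B P E]; erw [castK_trans]
      exact castK_self _ _


end KronPaper
end
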